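/- Let G₀ = ⟨b, c⟩ be a free group of rank 2, and for i ∈ ℤ let b_i = c^{-i} b c^i. Let φ be the injective endomorphism of G₀ sending b ↦ c^{-1} b c and c ↦ c, and let Γ = G₀ *_φ t be the corresponding HNN-extension. Then G₀ ∩ ⟨b, t⟩ = ⟨b_i : i ∈ ℤ⟩ in Γ. In particular, the subgroup ⟨b_i : i ∈ ℤ⟩ is benign in G₀. -/

import Mathlib

namespace Stmt16

/-- A group is finitely presented if it is isomorphic to a presented group with
finitely many generators and finitely many relators. -/
def FinitelyPresentedGroup (K : Type*) [Group K] : Prop :=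
  ∃ (n : ℕ) (rels : Set (FreeGroup (Fin n))), rels.Finite ∧
    Nonempty (K ≃* PresentedGroup rels)

/-- A subgroup `H` of a group `G` is benign in `G` if `G` embeds into some finitely
presented group `K` possessing a finitely generated subgroup `L` such that
`G ∩ L = H`. -/
def Benign {G : Type*} [Group G] (H : Subgroup G) : Prop :=
  ∃ (K : Type) (_ : Group K) (φ : G →* K) (L : Subgroup K),
    Function.Injective φ ∧ FinitelyPresentedGroup K ∧ L.FG ∧ L.comap φ = H

/-- `G₀` is the free group of rank 2 on `b`, `c`. -/
abbrev G0 := FreeGroup (Fin 2)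

def b : G0 := FreeGroup.of 0
def c : G0 := FreeGroup.of 1

/-- `b_i = c^{-i} b c^i`. -/
def bi (i : ℤ) : G0 := c ^ (-i) * b * c ^ i

/-- The monomorphism `φ : G₀ → G₀` with `φ(b) = b^c` and `φ(c) = c`. -/
def φm : G0 →* G0 := FreeGroup.lift ![c⁻¹ * b * c, c]

/-! ### Auxiliary lemmas -/

lemma φm_b : φm b = c⁻¹ * b * c := by simp [φm, b]
lemma φm_c : φm c = c := by simp [φm, c]
lemma bi_zero : bi 0 = b := by simp [bi]
lemma φm_bi (i : ℤ) : φm (bi i) = bi (i + 1) := by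
  simp only [bi, map_mul, map_zpow, φm_b, φm_c]
  rw [neg_add, zpow_add, zpow_add]
  group

/-- relators for the HNN extension presentation -/
def r1 : FreeGroup (Fin 3) :=
  .of 2 * .of 0 * (.of 2)⁻¹ * ((.of 1)⁻¹ * .of 0 * .of 1)⁻¹
def r2 : FreeGroup (Fin 3) := .of 2 * .of 1 * (.of 2)⁻¹ * (.of 1)⁻¹
def rels : Set (FreeGroup (Fin 3)) := {r1, r2}

abbrev P := PresentedGroup rels

lemma mk_rel {r : FreeGroup (Fin 3)} (hr : r ∈ rels) : (QuotientGroup.mk r : P) = 1 :=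
  (QuotientGroup.eq_one_iff r).2 (Subgroup.subset_normalClosure hr)

lemma prel1 : (PresentedGroup.of 2 : P) * .of 0 * (.of 2)⁻¹ = (.of 1)⁻¹ * .of 0 * .of 1 := by
  have := mk_rel (Or.inl rfl)
  rw [r1] at this
  have h2 : ((QuotientGroup.mk : FreeGroup (Fin 3) → P)
      (FreeGroup.of 2 * FreeGroup.of 0 * (FreeGroup.of 2)⁻¹ *
        ((FreeGroup.of 1)⁻¹ * FreeGroup.of 0 * FreeGroup.of 1)⁻¹)) =
      PresentedGroup.of 2 * PresentedGroup.of 0 * (PresentedGroup.of 2)⁻¹ *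
        ((PresentedGroup.of 1)⁻¹ * PresentedGroup.of 0 * PresentedGroup.of 1)⁻¹ := rfl
  rw [h2] at this
  exact mul_inv_eq_one.mp this

lemma prel2 : (PresentedGroup.of 2 : P) * .of 1 * (.of 2)⁻¹ = .of 1 := by
  have := mk_rel (Or.inr rfl)
  rw [r2] at this
  have h2 : ((QuotientGroup.mk : FreeGroup (Fin 3) → P)
      (FreeGroup.of 2 * FreeGroup.of 1 * (FreeGroup.of 2)⁻¹ * (FreeGroup.of 1)⁻¹)) =
      PresentedGroup.of 2 * PresentedGroup.of 1 * (PresentedGroup.of 2)⁻¹ *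
        (PresentedGroup.of 1)⁻¹ := rfl
  rw [h2] at this
  exact mul_inv_eq_one.mp this

def fP : G0 →* P := FreeGroup.lift ![.of 0, .of 1]
lemma fP_b : fP b = .of 0 := by simp [fP, b]
lemma fP_c : fP c = .of 1 := by simp [fP, c]

lemma fP_conj (g : G0) : (PresentedGroup.of 2 : P) * fP g * (.of 2)⁻¹ = fP (φm g) := by
  have : ((MulAut.conj (PresentedGroup.of 2 : P)).toMonoidHom.comp fP) = fP.comp φm := by
    apply FreeGroup.ext_hom
    intro a
    fin_cases a
    · show (PresentedGroup.of 2 : P) * fP b * (.of 2)⁻¹ = fP (φm b)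
      rw [φm_b, fP_b]
      simp only [map_mul, map_inv, fP_b, fP_c]
      exact prel1
    · show (PresentedGroup.of 2 : P) * fP c * (.of 2)⁻¹ = fP (φm c)
      rw [φm_c, fP_c]
      exact prel2
  have := DFunLike.congr_fun this g
  simpa using this

section
variable (ψ : (⊤ : Subgroup G0) ≃* φm.range)
    (hψ : ∀ x : (⊤ : Subgroup G0), ((ψ x : ↥φm.range) : G0) = φm (x : G0))

local notation "Γ" => HNNExtension G0 ⊤ φm.range ψ
local notation "T" => (HNNExtension.t : Γ)

include hψ in
lemma conj_t (g : G0) : T * HNNExtension.of g * T⁻¹ = HNNExtension.of (φm g) := by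
  have := HNNExtension.equiv_eq_conj (φ := ψ) ⟨g, Subgroup.mem_top g⟩
  rw [hψ] at this
  exact this.symm

include hψ in
lemma of_bi (i : ℤ) : (HNNExtension.of (bi i) : Γ) = T ^ i * HNNExtension.of b * T ^ (-i) := by
  induction i using Int.induction_on with
  | zero => simp [bi_zero]
  | succ i ih =>
      have : (bi (i + 1) : G0) = φm (bi i) := (φm_bi i).symm
      rw [this, ← conj_t ψ hψ, ih]
      group
  | pred i ih =>
      have h1 : (bi (-i) : G0) = φm (bi (-i - 1)) := by rw [φm_bi]; ring_nf
      rw [h1, ← conj_t ψ hψ] at ih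
      have h2 : (HNNExtension.of (bi (-i - 1)) : Γ) =
          T⁻¹ * (T * HNNExtension.of (bi (-i - 1)) * T⁻¹) * T := by group
      rw [h2, ih]
      have h3 : (-i - 1 : ℤ) = -(i+1) := by ring
      rw [h3]
      group

include hψ in
lemma conj_t_pow (i n : ℤ) :
    T ^ n * (HNNExtension.of (bi i) : Γ) * T ^ (-n) = HNNExtension.of (bi (i + n)) := by
  rw [of_bi ψ hψ, of_bi ψ hψ]
  group

include hψ in
lemma conjB {z : G0} (hz : z ∈ Subgroup.closure (Set.range bi)) (n : ℤ) :
    ∃ z' ∈ Subgroup.closure (Set.range bi),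
      T ^ n * (HNNExtension.of z : Γ) * T ^ (-n) = HNNExtension.of z' := by
  induction hz using Subgroup.closure_induction with
  | mem x hx =>
      obtain ⟨i, rfl⟩ := hx
      exact ⟨bi (i + n), Subgroup.subset_closure (Set.mem_range_self _), conj_t_pow ψ hψ i n⟩
  | one => exact ⟨1, one_mem _, by simp⟩
  | mul x y hx hy ihx ihy =>
      obtain ⟨x', hx', hxe⟩ := ihx
      obtain ⟨y', hy', hye⟩ := ihy
      refine ⟨x' * y', mul_mem hx' hy', ?_⟩
      rw [map_mul, map_mul, ← hxe, ← hye]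
      group
  | inv x hx ihx =>
      obtain ⟨x', hx', hxe⟩ := ihx
      refine ⟨x'⁻¹, inv_mem hx', ?_⟩
      rw [map_inv, map_inv, ← hxe]
      group

include hψ in
lemma comap_eq :
    (Subgroup.closure
        {HNNExtension.of b, (HNNExtension.t : HNNExtension G0 ⊤ φm.range ψ)}).comap
      (HNNExtension.of : G0 →* HNNExtension G0 ⊤ φm.range ψ)
      = Subgroup.closure (Set.range bi) := by
  apply le_antisymm
  · intro g hg
    rw [Subgroup.mem_comap] at hg
    have key : ∀ x ∈ Subgroup.closure {HNNExtension.of b, (HNNExtension.t : Γ)},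
        ∃ z ∈ Subgroup.closure (Set.range bi), ∃ n : ℤ, x = HNNExtension.of z * T ^ n := by
      intro x hx
      induction hx using Subgroup.closure_induction with
      | mem x hx =>
          rcases hx with rfl | rfl
          · exact ⟨b, Subgroup.subset_closure ⟨0, bi_zero⟩, 0, by simp⟩
          · exact ⟨1, one_mem _, 1, by simp⟩
      | one => exact ⟨1, one_mem _, 0, by simp⟩
      | mul x y hx hy ihx ihy =>
          obtain ⟨z₁, hz₁, n₁, rfl⟩ := ihx
          obtain ⟨z₂, hz₂, n₂, rfl⟩ := ihy
          obtain ⟨z₂', hz₂', he⟩ := conjB ψ hψ hz₂ n₁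
          refine ⟨z₁ * z₂', mul_mem hz₁ hz₂', n₁ + n₂, ?_⟩
          rw [map_mul, ← he]
          group
      | inv x hx ihx =>
          obtain ⟨z, hz, n, rfl⟩ := ihx
          obtain ⟨z', hz', he⟩ := conjB ψ hψ (inv_mem hz) (-n)
          refine ⟨z', hz', -n, ?_⟩
          rw [← he, map_inv]
          group
    obtain ⟨z, hz, n, he⟩ := key _ hg
    set χ : Γ →* Multiplicative ℤ :=
      HNNExtension.lift 1 (Multiplicative.ofAdd 1) (by intro a; simp) with hχ
    have h1 : χ (HNNExtension.of g) = χ (HNNExtension.of z * T ^ n) := by rw [he]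
    have h2 : (1 : Multiplicative ℤ) = (Multiplicative.ofAdd 1) ^ n := by
      simpa [hχ] using h1
    have hn : n = 0 := by
      have := h2.symm
      rwa [← ofAdd_zsmul, smul_eq_mul, mul_one, ofAdd_eq_one] at this
    rw [hn, zpow_zero, mul_one] at he
    have := HNNExtension.of_injective (G := G0) (A := ⊤) (B := φm.range) (φ := ψ) he
    rwa [this]
  · rw [Subgroup.closure_le]
    rintro _ ⟨i, rfl⟩
    rw [SetLike.mem_coe, Subgroup.mem_comap, of_bi ψ hψ]
    have hT : T ∈ Subgroup.closure {HNNExtension.of b, (HNNExtension.t : Γ)} :=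
      Subgroup.subset_closure (Or.inr rfl)
    have hb : HNNExtension.of b ∈ Subgroup.closure {HNNExtension.of b, (HNNExtension.t : Γ)} :=
      Subgroup.subset_closure (Or.inl rfl)
    exact mul_mem (mul_mem (zpow_mem hT i) hb) (zpow_mem hT (-i))

def toP : Γ →* P :=
  HNNExtension.lift fP (.of 2) (by
    intro a
    have h := fP_conj (a : G0)
    rw [← hψ] at h
    calc (PresentedGroup.of 2 : P) * fP ↑a
        = ((PresentedGroup.of 2 : P) * fP ↑a * (.of 2)⁻¹) * .of 2 := by group
      _ = fP ((ψ a : G0)) * .of 2 := by rw [h])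

include hψ in
lemma toΓ_rels : ∀ r ∈ rels, (FreeGroup.lift ![HNNExtension.of b, HNNExtension.of c, T]) r
    = (1 : Γ) := by
  rintro r (rfl | rfl)
  · simp only [r1, map_mul, map_inv, FreeGroup.lift_apply_of, Matrix.cons_val_zero,
      Matrix.cons_val_one, Matrix.head_cons]
    rw [mul_inv_eq_one]
    show T * HNNExtension.of b * T⁻¹ = _
    rw [conj_t ψ hψ, φm_b]
    simp [map_mul]
  · simp only [r2, map_mul, map_inv, FreeGroup.lift_apply_of, Matrix.cons_val_zero,
      Matrix.cons_val_one, Matrix.head_cons]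
    rw [mul_inv_eq_one]
    show T * HNNExtension.of c * T⁻¹ = _
    rw [conj_t ψ hψ, φm_c]

noncomputable def toΓ : P →* Γ := PresentedGroup.toGroup (toΓ_rels ψ hψ)

include hψ in
lemma fp : FinitelyPresentedGroup (HNNExtension G0 ⊤ φm.range ψ) := by
  refine ⟨3, rels, (Set.finite_singleton r2).insert r1,
    ⟨MonoidHom.toMulEquiv (toP ψ hψ) (toΓ ψ hψ) ?_ ?_⟩⟩
  · apply HNNExtension.hom_ext
    · apply FreeGroup.ext_hom
      intro a
      fin_cases a
      · show (toΓ ψ hψ) ((toP ψ hψ) (HNNExtension.of b)) = HNNExtension.of b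
        rw [toP, HNNExtension.lift_of, fP_b]
        simp [toΓ, PresentedGroup.toGroup.of]
      · show (toΓ ψ hψ) ((toP ψ hψ) (HNNExtension.of c)) = HNNExtension.of c
        rw [toP, HNNExtension.lift_of, fP_c]
        simp [toΓ, PresentedGroup.toGroup.of]
    · show (toΓ ψ hψ) ((toP ψ hψ) T) = T
      rw [toP, HNNExtension.lift_t]
      simp [toΓ, PresentedGroup.toGroup.of]
  · apply PresentedGroup.ext
    intro x
    fin_cases x
    · show (toP ψ hψ) ((toΓ ψ hψ) (.of 0)) = (.of 0 : P)
      rw [toΓ, PresentedGroup.toGroup.of]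
      show (toP ψ hψ) (HNNExtension.of b) = _
      rw [toP, HNNExtension.lift_of, fP_b]
    · show (toP ψ hψ) ((toΓ ψ hψ) (.of 1)) = (.of 1 : P)
      rw [toΓ, PresentedGroup.toGroup.of]
      show (toP ψ hψ) (HNNExtension.of c) = _
      rw [toP, HNNExtension.lift_of, fP_c]
    · show (toP ψ hψ) ((toΓ ψ hψ) (.of 2)) = (.of 2 : P)
      rw [toΓ, PresentedGroup.toGroup.of]
      show (toP ψ hψ) T = _
      rw [toP, HNNExtension.lift_t]
end

/-- In the HNN-extension `Γ = G₀ *_φ t` of `G₀` with respect to `φ`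
(regarded as an isomorphism `ψ` from `G₀ = ⊤` onto its image), we have
`G₀ ∩ ⟨b, t⟩ = ⟨b_i : i ∈ ℤ⟩`; in particular `⟨b_i : i ∈ ℤ⟩` is benign in `G₀`. -/
theorem benign_conjugates (ψ : (⊤ : Subgroup G0) ≃* φm.range)
    (hψ : ∀ x : (⊤ : Subgroup G0), ((ψ x : ↥φm.range) : G0) = φm (x : G0)) :
    (Subgroup.closure
        {HNNExtension.of b, (HNNExtension.t : HNNExtension G0 ⊤ φm.range ψ)}).comap
      (HNNExtension.of : G0 →* HNNExtension G0 ⊤ φm.range ψ)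
      = Subgroup.closure (Set.range bi) ∧
    Benign (Subgroup.closure (Set.range bi)) := by
  refine ⟨comap_eq ψ hψ, ?_⟩
  refine ⟨HNNExtension G0 ⊤ φm.range ψ, inferInstance, HNNExtension.of,
    Subgroup.closure {HNNExtension.of b, HNNExtension.t},
    HNNExtension.of_injective ψ, fp ψ hψ, ?_, comap_eq ψ hψ⟩
  exact (Subgroup.fg_iff _).2 ⟨_, rfl, (Set.finite_singleton _).insert _⟩

end Stmt16
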